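/- Let S_0, S_1, ..., S_n be a time-homogeneous Markov chain on a finite state space 𝒮 with transition matrix P that is irreducible and satisfies P(s,s) ≥ η > 0 for all s, and let n₀, δ > 0 be such that the two-endpoint jump bound holds (E(|J| over any stretch of length m ≥ n₀| endpoints) ≤ (1−δ)m). Fix k, indices 0 ≤ i₁ ≤ ... ≤ i_k ≤ n, and suppose n ≥ (k+1)·n₀. Let E be any event of positive probability that is measurable with respect to (S_{i₁}, ..., S_{i_k}) (i.e., E is a union of events of the form {S_{i₁}=s₁, ..., S_{i_k}=s_k}). Then E(|J| | E) ≤ (1 − δ/(k+1))·n, where J = {i ∈ {1,...,n} : S_i ≠ S_{i−1}}. -/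

import Mathlib

/-- The probability of a path `f : Fin (n+1) → S` under a time-homogeneous Markov chain
with initial distribution `ν` and transition matrix `P`. -/
noncomputable def mjpPathWeight {S : Type*} [Fintype S] (n : ℕ) (ν : S → ℝ)
    (P : Matrix S S ℝ) (f : Fin (n + 1) → S) : ℝ :=
  ν (f 0) * ∏ i : Fin n, P (f i.castSucc) (f i.succ)

open Classical in
/-- Probability of the event `E` under the Markov chain path distribution. -/
noncomputable def mjpProb {S : Type*} [Fintype S] (n : ℕ) (ν : S → ℝ)
    (P : Matrix S S ℝ) (E : (Fin (n + 1) → S) → Prop) : ℝ :=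
  ∑ f : Fin (n + 1) → S, if E f then mjpPathWeight n ν P f else 0

open Classical in
/-- Conditional expectation of `g` given the event `E` under the Markov chain
path distribution. -/
noncomputable def mjpCondExp {S : Type*} [Fintype S] (n : ℕ) (ν : S → ℝ)
    (P : Matrix S S ℝ) (g : (Fin (n + 1) → S) → ℝ) (E : (Fin (n + 1) → S) → Prop) : ℝ :=
  (∑ f : Fin (n + 1) → S, if E f then g f * mjpPathWeight n ν P f else 0) / mjpProb n ν P E

/-- `|J|`: the number of indices `i ∈ {1,…,n}` with `S_i ≠ S_{i-1}` along the path `f`. -/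
def numJumps {S : Type*} [DecidableEq S] (n : ℕ) (f : Fin (n + 1) → S) : ℕ :=
  (Finset.univ.filter fun i : Fin n => f i.succ ≠ f i.castSucc).card

section Aux
variable {S : Type*} [Fintype S] [DecidableEq S]

/-- segment weight -/
noncomputable def segW (P : Matrix S S ℝ) (m : ℕ) (h : Fin (m + 1) → S) : ℝ :=
  ∏ i : Fin m, P (h i.castSucc) (h i.succ)

open Classical in
noncomputable def segSum (P : Matrix S S ℝ) (m : ℕ) (G : (Fin (m + 1) → S) → ℝ)
    (a b : S) : ℝ :=
  ∑ h : Fin (m + 1) → S, if h 0 = a ∧ h (Fin.last m) = b then G h * segW P m h else 0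

def glueUV (n p q : ℕ) (u : {x : Fin (n + 1) // x.val ≤ p ∨ q ≤ x.val} → S)
    (v : {x : Fin (n + 1) // ¬(x.val ≤ p ∨ q ≤ x.val)} → S) : Fin (n + 1) → S :=
  fun i => if h : i.val ≤ p ∨ q ≤ i.val then u ⟨i, h⟩ else v ⟨i, h⟩

def segOf (n p q : ℕ) (hpq : p ≤ q) (hq : q ≤ n) (f : Fin (n + 1) → S) :
    Fin (q - p + 1) → S :=
  fun i => f ⟨p + i.val, by have := i.isLt; omega⟩

lemma mjpPathWeight_nonneg (n : ℕ) (ν : S → ℝ) (P : Matrix S S ℝ)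
    (hν0 : ∀ s, 0 ≤ ν s) (hPnn : ∀ s s', 0 ≤ P s s') (f : Fin (n + 1) → S) :
    0 ≤ mjpPathWeight n ν P f :=
  mul_nonneg (hν0 _) (Finset.prod_nonneg fun _ _ => hPnn _ _)

lemma segW_nonneg (P : Matrix S S ℝ) (hPnn : ∀ s s', 0 ≤ P s s') (m : ℕ)
    (h : Fin (m + 1) → S) : 0 ≤ segW P m h :=
  Finset.prod_nonneg fun _ _ => hPnn _ _

open Classical in
lemma segSum_nonneg (P : Matrix S S ℝ) (hPnn : ∀ s s', 0 ≤ P s s') (m : ℕ)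
    (G : (Fin (m + 1) → S) → ℝ) (hG : ∀ h, 0 ≤ G h) (a b : S) :
    0 ≤ segSum P m G a b := by
  refine Finset.sum_nonneg fun h _ => ?_
  split
  · exact mul_nonneg (hG h) (segW_nonneg P hPnn m h)
  · exact le_rfl

/-- Choice of the cut interval: a maximal gap between consecutive observation indices
(together with the endpoints 0 and n). -/
lemma exists_cut (n n₀ k : ℕ) (hn1 : 1 ≤ n) (hn : (k + 1) * n₀ ≤ n)
    (idx : Fin k → Fin (n + 1)) (hidx : Monotone idx) :
    ∃ p q : ℕ, p ≤ q ∧ q ≤ n ∧ n₀ ≤ q - p ∧ 1 ≤ q - p ∧ n ≤ (k + 1) * (q - p) ∧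
      ∀ j, (idx j).val ≤ p ∨ q ≤ (idx j).val := by
  set d : ℕ → ℕ := fun j =>
    if _h0 : j = 0 then 0 else if _h1 : k + 1 ≤ j then n
    else (idx ⟨j - 1, by omega⟩).val with hd
  have hdn : ∀ j, d j ≤ n := by
    intro j
    rw [hd]
    dsimp only
    split
    · exact Nat.zero_le n
    · split
      · exact le_rfl
      · exact Nat.lt_succ_iff.mp (idx _).isLt
  have hstep : ∀ j, d j ≤ d (j + 1) := by
    intro j
    rcases Nat.eq_zero_or_pos j with h0 | h0
    · subst h0; simp [hd]
    rcases le_or_gt (k + 1) j with h1 | h1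
    · have : d j = n := by rw [hd]; dsimp only; rw [dif_neg (by omega), dif_pos h1]
      have h2 : d (j + 1) = n := by rw [hd]; dsimp only; rw [dif_neg (by omega), dif_pos (by omega)]
      omega
    · have hj : d j = (idx ⟨j - 1, by omega⟩).val := by
        rw [hd]; dsimp only; rw [dif_neg (by omega), dif_neg (by omega)]
      rcases Nat.lt_or_ge (j + 1) (k + 1) with h2 | h2
      · have hj1 : d (j + 1) = (idx ⟨j, by omega⟩).val := by
          rw [hd]; dsimp only; rw [dif_neg (by omega), dif_neg (by omega)]
          exact congrArg (fun z => (idx z).val) (Fin.ext (by simp))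
        rw [hj, hj1]
        exact hidx (by simp [Fin.le_def])
      · have hj1 : d (j + 1) = n := by
          rw [hd]; dsimp only; rw [dif_neg (by omega), dif_pos h2]
        rw [hj, hj1]
        exact Nat.lt_succ_iff.mp (idx _).isLt
  have hmono : Monotone d := monotone_nat_of_le_succ hstep
  have hd0 : d 0 = 0 := by simp [hd]
  have hdlast : d (k + 1) = n := by
    rw [hd]; dsimp only; rw [dif_neg (by omega), dif_pos le_rfl]
  obtain ⟨j0, hj0mem, hj0max⟩ := Finset.exists_max_image (Finset.range (k + 1))
    (fun j => d (j + 1) - d j) ⟨0, Finset.mem_range.mpr (by omega)⟩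
  set g := d (j0 + 1) - d j0 with hg
  have hlin : ∀ t, t ≤ k + 1 → d t ≤ t * g := by
    intro t
    induction t with
    | zero => intro _; simp [hd0]
    | succ t ih =>
      intro ht
      have h1 : d t ≤ t * g := ih (by omega)
      have h2 : d (t + 1) - d t ≤ g := hj0max t (Finset.mem_range.mpr (by omega))
      have := hstep t
      calc d (t + 1) ≤ d t + g := by omega
        _ ≤ t * g + g := by omega
        _ = (t + 1) * g := by ring
  have hng : n ≤ (k + 1) * g := by
    have := hlin (k + 1) le_rfl
    omega
  refine ⟨d j0, d (j0 + 1), hstep j0, hdn _, ?_, ?_, ?_, ?_⟩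
  · -- n₀ ≤ g
    have : (k + 1) * n₀ ≤ (k + 1) * g := le_trans hn hng
    exact Nat.le_of_mul_le_mul_left this (by omega)
  · by_contra hcon
    have : g = 0 := by omega
    rw [this, Nat.mul_zero] at hng
    omega
  · exact hng
  · intro j
    have hidxval : (idx j).val = d (j.val + 1) := by
      rw [hd]; dsimp only
      rw [dif_neg (by omega), dif_neg (by have := j.isLt; omega)]
      exact congrArg (fun z => (idx z).val) (Fin.ext (by simp))
    rcases le_or_gt (j.val + 1) j0 with h | h
    · left; rw [hidxval]; exact hmono h
    · right; rw [hidxval]; exact hmono (by omega)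


lemma prod_mid (P : Matrix S S ℝ) (n p q : ℕ) (hpq : p ≤ q) (hq : q ≤ n)
    (f : Fin (n + 1) → S) :
    ∏ i ∈ Finset.univ.filter (fun i : Fin n => p ≤ i.val ∧ i.val < q),
        P (f i.castSucc) (f i.succ)
      = segW P (q - p) (segOf n p q hpq hq f) := by
  unfold segW segOf
  refine Finset.prod_bij'
    (fun a ha => (⟨a.val - p, by
      simp only [Finset.mem_filter] at ha; omega⟩ : Fin (q - p)))
    (fun b _ => (⟨p + b.val, by have := b.isLt; omega⟩ : Fin n))
    ?_ ?_ ?_ ?_ ?_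
  · intro a ha; exact Finset.mem_univ _
  · intro b hb
    simp only [Finset.mem_filter]
    refine ⟨Finset.mem_univ _, by omega, by have := b.isLt; omega⟩
  · intro a ha
    simp only [Finset.mem_filter] at ha
    exact Fin.ext (by simp <;> omega)
  · intro b hb
    exact Fin.ext (by simp)
  · intro a ha
    simp only [Finset.mem_filter] at ha
    congr 1
    · exact congrArg f (Fin.ext (by simp [Fin.castSucc] <;> omega))
    · exact congrArg f (Fin.ext (by simp [Fin.succ] <;> omega))

lemma jumps_split (n p q : ℕ) (hpq : p ≤ q) (hq : q ≤ n) (f : Fin (n + 1) → S) :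
    numJumps n f ≤ (n - (q - p)) + numJumps (q - p) (segOf n p q hpq hq f) := by
  classical
  set J : Finset (Fin n) := Finset.univ.filter (fun i => f i.succ ≠ f i.castSucc) with hJ
  set mid : Fin n → Prop := fun i => p ≤ i.val ∧ i.val < q with hmid
  have hsplit : (J.filter mid).card + (J.filter (fun i => ¬ mid i)).card = J.card :=
    Finset.card_filter_add_card_filter_not (p := mid)
  have hmidcard : (Finset.univ.filter (fun i : Fin n => mid i)).card = q - p := by
    rw [← Fintype.card_fin (q - p), ← Finset.card_univ]
    refine Finset.card_bij'
      (fun (a : Fin n) ha => (⟨a.val - p, by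
        simp only [hmid, Finset.mem_filter] at ha; omega⟩ : Fin (q - p)))
      (fun (b : Fin (q - p)) _ => (⟨p + b.val, by have := b.isLt; omega⟩ : Fin n))
      ?_ ?_ ?_ ?_
    · intro a ha; exact Finset.mem_univ _
    · intro b hb
      simp only [hmid, Finset.mem_filter]
      refine ⟨Finset.mem_univ _, by omega, by have := b.isLt; omega⟩
    · intro a ha
      simp only [hmid, Finset.mem_filter] at ha
      exact Fin.ext (by simp <;> omega)
    · intro b hb
      exact Fin.ext (by simp)
  have hnegcard : (Finset.univ.filter (fun i : Fin n => ¬ mid i)).card = n - (q - p) := by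
    have h3 : (Finset.univ.filter (fun i : Fin n => mid i)).card
        + (Finset.univ.filter (fun i : Fin n => ¬ mid i)).card
        = (Finset.univ : Finset (Fin n)).card :=
      Finset.card_filter_add_card_filter_not (p := mid)
    rw [hmidcard] at h3
    simp only [Finset.card_univ, Fintype.card_fin] at h3
    omega
  have h1 : (J.filter (fun i => ¬ mid i)).card ≤ n - (q - p) := by
    rw [← hnegcard]
    apply Finset.card_le_card
    intro x hx
    simp only [Finset.mem_filter] at hx ⊢
    exact ⟨Finset.mem_univ x, hx.2⟩
  have h2 : (J.filter mid).card = numJumps (q - p) (segOf n p q hpq hq f) := by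
    unfold numJumps
    refine Finset.card_bij'
      (fun (a : Fin n) ha => (⟨a.val - p, by
        simp only [hJ, hmid, Finset.mem_filter] at ha; omega⟩ : Fin (q - p)))
      (fun (b : Fin (q - p)) _ => (⟨p + b.val, by have := b.isLt; omega⟩ : Fin n))
      ?_ ?_ ?_ ?_
    · intro a ha
      simp only [hJ, hmid, Finset.mem_filter] at ha
      simp only [Finset.mem_filter]
      refine ⟨Finset.mem_univ _, ?_⟩
      have e1 : segOf n p q hpq hq f (Fin.succ ⟨a.val - p, by omega⟩)
          = f a.succ := by
        unfold segOf
        exact congrArg f (Fin.ext (by simp [Fin.succ] <;> omega))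
      have e2 : segOf n p q hpq hq f (Fin.castSucc ⟨a.val - p, by omega⟩)
          = f a.castSucc := by
        unfold segOf
        exact congrArg f (Fin.ext (by simp [Fin.castSucc] <;> omega))
      rw [e1, e2]
      exact ha.1.2
    · intro b hb
      simp only [Finset.mem_filter] at hb
      simp only [hJ, hmid, Finset.mem_filter]
      have hblt := b.isLt
      refine ⟨⟨Finset.mem_univ _, ?_⟩, by omega, by omega⟩
      have e1 : segOf n p q hpq hq f b.succ
          = f (Fin.succ ⟨p + b.val, by omega⟩) := by
        unfold segOf
        exact congrArg f (Fin.ext (by simp [Fin.succ] <;> omega))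
      have e2 : segOf n p q hpq hq f b.castSucc
          = f (Fin.castSucc ⟨p + b.val, by omega⟩) := by
        unfold segOf
        exact congrArg f (Fin.ext (by simp [Fin.castSucc] <;> omega))
      rw [← e1, ← e2]
      exact hb.2
    · intro a ha
      simp only [hJ, hmid, Finset.mem_filter] at ha
      exact Fin.ext (by simp <;> omega)
    · intro b hb
      exact Fin.ext (by simp)
  have hJcard : numJumps n f = J.card := by rw [hJ]; rfl
  omega


lemma sum_glue (n p q : ℕ) (F : (Fin (n + 1) → S) → ℝ) :
    ∑ f : Fin (n + 1) → S, F f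
      = ∑ u : {x : Fin (n + 1) // x.val ≤ p ∨ q ≤ x.val} → S,
          ∑ v : {x : Fin (n + 1) // ¬(x.val ≤ p ∨ q ≤ x.val)} → S,
            F (glueUV n p q u v) := by
  classical
  rw [← Equiv.sum_comp (Equiv.piEquivPiSubtypeProd
      (fun i : Fin (n + 1) => i.val ≤ p ∨ q ≤ i.val) (fun _ => S)).symm F,
    Fintype.sum_prod_type]
  rfl

open Classical in
lemma innerSumSeg (n p q : ℕ) (hpq : p ≤ q) (hq : q ≤ n)
    (u : {x : Fin (n + 1) // x.val ≤ p ∨ q ≤ x.val} → S)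
    (F : (Fin (q - p + 1) → S) → ℝ) :
    ∑ v : {x : Fin (n + 1) // ¬(x.val ≤ p ∨ q ≤ x.val)} → S,
        F (segOf n p q hpq hq (glueUV n p q u v))
      = ∑ h : Fin (q - p + 1) → S,
          if h 0 = u ⟨⟨p, by omega⟩, Or.inl le_rfl⟩ ∧
             h (Fin.last (q - p)) = u ⟨⟨q, by omega⟩, Or.inr le_rfl⟩ then F h else 0 := by
  rw [← Finset.sum_filter]
  refine Finset.sum_bij'
    (fun v _ => segOf n p q hpq hq (glueUV n p q u v))
    (fun h _ => fun x => h ⟨x.val.val - p, by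
      have h1 := x.prop; have h2 := x.val.isLt; omega⟩)
    ?_ ?_ ?_ ?_ ?_
  · intro v _
    simp only [Finset.mem_filter]
    refine ⟨Finset.mem_univ _, ?_, ?_⟩
    · show glueUV n p q u v ⟨p + (0 : Fin (q - p + 1)).val, _⟩ = _
      have hc : ((⟨p + (0 : Fin (q - p + 1)).val, by omega⟩ : Fin (n + 1)).val ≤ p
          ∨ q ≤ (⟨p + (0 : Fin (q - p + 1)).val, by omega⟩ : Fin (n + 1)).val) := by
        left; simp [Fin.val_zero]
      rw [glueUV, dif_pos hc]
      exact congrArg u (Subtype.ext (Fin.ext (by simp)))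
    · show glueUV n p q u v ⟨p + (Fin.last (q - p)).val, _⟩ = _
      have hc : ((⟨p + (Fin.last (q - p)).val, by have := (Fin.last (q-p)).isLt; omega⟩ :
          Fin (n + 1)).val ≤ p ∨ q ≤ (⟨p + (Fin.last (q - p)).val,
          by have := (Fin.last (q-p)).isLt; omega⟩ : Fin (n + 1)).val) := by
        right; simp [Fin.last] <;> omega
      rw [glueUV, dif_pos hc]
      exact congrArg u (Subtype.ext (Fin.ext (by simp [Fin.last] <;> omega)))
  · intro h _; exact Finset.mem_univ _
  · intro v _
    funext x
    have hxp := x.prop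
    have hxlt := x.val.isLt
    show segOf n p q hpq hq (glueUV n p q u v) ⟨x.val.val - p, _⟩ = v x
    unfold segOf
    have h1 : (⟨p + (x.val.val - p), by omega⟩ : Fin (n + 1)) = x.val :=
      Fin.ext (by simp <;> omega)
    rw [h1]
    unfold glueUV
    rw [dif_neg x.prop]
  · intro h hmem
    simp only [Finset.mem_filter] at hmem
    funext i
    have hilt := i.isLt
    show glueUV n p q u _ ⟨p + i.val, _⟩ = h i
    unfold glueUV
    by_cases hc : ((⟨p + i.val, by omega⟩ : Fin (n + 1)).val ≤ p
        ∨ q ≤ (⟨p + i.val, by omega⟩ : Fin (n + 1)).val)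
    · rw [dif_pos hc]
      simp only at hc
      rcases hc with hc | hc
      · have hi0 : i = 0 := Fin.val_eq_zero_iff.mp (by omega)
        subst hi0
        exact (congrArg u (Subtype.ext (Fin.ext (by simp)))).trans hmem.2.1.symm
      · have hil : i = Fin.last (q - p) := Fin.ext (by simp [Fin.last] <;> omega)
        subst hil
        exact (congrArg u (Subtype.ext (Fin.ext (by simp [Fin.last] <;> omega)))).trans
          hmem.2.2.symm
    · rw [dif_neg hc]
      exact congrArg h (Fin.ext (by simp <;> omega))
  · intro v _
    rfl


def extendU (n p q : ℕ) (hp : p ≤ n)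
    (u : {x : Fin (n + 1) // x.val ≤ p ∨ q ≤ x.val} → S) : Fin (n + 1) → S :=
  glueUV n p q u (fun _ => u ⟨⟨p, by omega⟩, Or.inl le_rfl⟩)

open Classical in
lemma factor (P : Matrix S S ℝ) (ν : S → ℝ) (n p q : ℕ) (hpq : p ≤ q) (hq : q ≤ n)
    (E : (Fin (n + 1) → S) → Prop)
    (hE : ∀ f g : Fin (n + 1) → S,
      (∀ i : Fin (n + 1), i.val ≤ p ∨ q ≤ i.val → f i = g i) → (E f ↔ E g))
    (G : (Fin (q - p + 1) → S) → ℝ) :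
    (∑ f : Fin (n + 1) → S,
      if E f then G (segOf n p q hpq hq f) * mjpPathWeight n ν P f else 0)
    = ∑ u : {x : Fin (n + 1) // x.val ≤ p ∨ q ≤ x.val} → S,
        (if E (extendU n p q (hpq.trans hq) u) then
          (ν (extendU n p q (hpq.trans hq) u 0) *
            ∏ i ∈ Finset.univ.filter (fun i : Fin n => ¬(p ≤ i.val ∧ i.val < q)),
              P (extendU n p q (hpq.trans hq) u i.castSucc)
                (extendU n p q (hpq.trans hq) u i.succ)) *
          segSum P (q - p) G (u ⟨⟨p, by omega⟩, Or.inl le_rfl⟩)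
            (u ⟨⟨q, by omega⟩, Or.inr le_rfl⟩)
        else 0) := by
  rw [sum_glue n p q]
  refine Finset.sum_congr rfl fun u _ => ?_
  set hp : p ≤ n := hpq.trans hq
  have hagree : ∀ v (i : Fin (n + 1)), (i.val ≤ p ∨ q ≤ i.val) →
      glueUV n p q u v i = extendU n p q hp u i := by
    intro v i hi
    unfold extendU glueUV
    rw [dif_pos hi, dif_pos hi]
  have hEiff : ∀ v, E (glueUV n p q u v) ↔ E (extendU n p q hp u) :=
    fun v => hE _ _ (hagree v)
  have hw : ∀ v, mjpPathWeight n ν P (glueUV n p q u v)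
      = (ν (extendU n p q hp u 0) *
          ∏ i ∈ Finset.univ.filter (fun i : Fin n => ¬(p ≤ i.val ∧ i.val < q)),
            P (extendU n p q hp u i.castSucc) (extendU n p q hp u i.succ)) *
        segW P (q - p) (segOf n p q hpq hq (glueUV n p q u v)) := by
    intro v
    unfold mjpPathWeight
    rw [← Finset.prod_filter_mul_prod_filter_not Finset.univ
      (fun i : Fin n => p ≤ i.val ∧ i.val < q)]
    rw [prod_mid P n p q hpq hq]
    have h0 : glueUV n p q u v 0 = extendU n p q hp u 0 :=
      hagree v 0 (Or.inl (Nat.zero_le p))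
    have hext : ∏ i ∈ Finset.univ.filter (fun i : Fin n => ¬(p ≤ i.val ∧ i.val < q)),
          P (glueUV n p q u v i.castSucc) (glueUV n p q u v i.succ)
        = ∏ i ∈ Finset.univ.filter (fun i : Fin n => ¬(p ≤ i.val ∧ i.val < q)),
          P (extendU n p q hp u i.castSucc) (extendU n p q hp u i.succ) := by
      refine Finset.prod_congr rfl fun i hi => ?_
      simp only [Finset.mem_filter] at hi
      have hc1 : (i.castSucc).val ≤ p ∨ q ≤ (i.castSucc).val := by
        simp only [Fin.coe_castSucc]; omega
      have hc2 : (i.succ).val ≤ p ∨ q ≤ (i.succ).val := by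
        simp only [Fin.val_succ]; omega
      rw [hagree v _ hc1, hagree v _ hc2]
    rw [h0, hext]
    ring
  calc ∑ v : {x : Fin (n + 1) // ¬(x.val ≤ p ∨ q ≤ x.val)} → S,
        (if E (glueUV n p q u v) then
          G (segOf n p q hpq hq (glueUV n p q u v)) *
            mjpPathWeight n ν P (glueUV n p q u v) else 0)
      = ∑ v : {x : Fin (n + 1) // ¬(x.val ≤ p ∨ q ≤ x.val)} → S,
        (if E (extendU n p q hp u) then
          (ν (extendU n p q hp u 0) *
            ∏ i ∈ Finset.univ.filter (fun i : Fin n => ¬(p ≤ i.val ∧ i.val < q)),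
              P (extendU n p q hp u i.castSucc) (extendU n p q hp u i.succ)) *
          (G (segOf n p q hpq hq (glueUV n p q u v)) *
            segW P (q - p) (segOf n p q hpq hq (glueUV n p q u v))) else 0) := by
        refine Finset.sum_congr rfl fun v _ => ?_
        rw [if_congr (hEiff v) rfl rfl]
        by_cases hEe : E (extendU n p q hp u)
        · rw [if_pos hEe, if_pos hEe, hw v]
          ring
        · rw [if_neg hEe, if_neg hEe]
    _ = if E (extendU n p q hp u) then
          (ν (extendU n p q hp u 0) *
            ∏ i ∈ Finset.univ.filter (fun i : Fin n => ¬(p ≤ i.val ∧ i.val < q)),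
              P (extendU n p q hp u i.castSucc) (extendU n p q hp u i.succ)) *
          (∑ v : {x : Fin (n + 1) // ¬(x.val ≤ p ∨ q ≤ x.val)} → S,
            G (segOf n p q hpq hq (glueUV n p q u v)) *
              segW P (q - p) (segOf n p q hpq hq (glueUV n p q u v))) else 0 := by
        by_cases hEe : E (extendU n p q hp u)
        · rw [if_pos hEe]
          simp only [if_pos hEe]
          rw [Finset.mul_sum]
        · simp only [if_neg hEe, Finset.sum_const_zero]
    _ = _ := by
        rw [innerSumSeg n p q hpq hq u (fun h => G h * segW P (q - p) h)]
        rfl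


open Classical in
lemma seg_bound (P : Matrix S S ℝ) (hPnn : ∀ s s', 0 ≤ P s s')
    (n₀ : ℕ) (δ : ℝ)
    (hbound : ∀ (μ : S → ℝ), (∀ s, 0 ≤ μ s) → (∑ s, μ s = 1) →
      ∀ m : ℕ, n₀ ≤ m → ∀ a b : S,
        0 < mjpProb m μ P (fun f => f 0 = a ∧ f (Fin.last m) = b) →
        mjpCondExp m μ P (fun f => (numJumps m f : ℝ))
            (fun f => f 0 = a ∧ f (Fin.last m) = b) ≤ (1 - δ) * m)
    (m : ℕ) (hm : n₀ ≤ m) (a b : S) :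
    segSum P m (fun h => (numJumps m h : ℝ)) a b
      ≤ ((1 - δ) * m) * segSum P m (fun _ => 1) a b := by
  set μ : S → ℝ := fun s => if s = a then (1 : ℝ) else 0 with hμ
  have hμ0 : ∀ s, 0 ≤ μ s := fun s => by rw [hμ]; dsimp only; split <;> norm_num
  have hμ1 : ∑ s, μ s = 1 := by rw [hμ]; simp
  have hμa : μ a = 1 := by rw [hμ]; simp
  have hZ : mjpProb m μ P (fun f => f 0 = a ∧ f (Fin.last m) = b)
      = segSum P m (fun _ => 1) a b := by
    unfold mjpProb segSum
    refine Finset.sum_congr rfl fun h _ => ?_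
    by_cases hEv : h 0 = a ∧ h (Fin.last m) = b
    · rw [if_pos hEv, if_pos hEv]
      unfold mjpPathWeight segW
      dsimp only
      rw [hEv.1, hμa, one_mul]
    · rw [if_neg hEv, if_neg hEv]
  have hN : (∑ h : Fin (m + 1) → S,
        if h 0 = a ∧ h (Fin.last m) = b then
          ((numJumps m h : ℝ)) * mjpPathWeight m μ P h else 0)
      = segSum P m (fun h => (numJumps m h : ℝ)) a b := by
    unfold segSum
    refine Finset.sum_congr rfl fun h _ => ?_
    by_cases hEv : h 0 = a ∧ h (Fin.last m) = b
    · rw [if_pos hEv, if_pos hEv]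
      unfold mjpPathWeight segW
      dsimp only
      rw [hEv.1, hμa, one_mul]
    · rw [if_neg hEv, if_neg hEv]
  by_cases hZ0 : segSum P m (fun _ => 1) a b = 0
  · have h0 : segSum P m (fun h => (numJumps m h : ℝ)) a b = 0 := by
      unfold segSum at hZ0 ⊢
      have hterm := (Finset.sum_eq_zero_iff_of_nonneg (fun h _ => by
        split
        · exact mul_nonneg zero_le_one (segW_nonneg P hPnn m h)
        · exact le_rfl)).mp hZ0
      refine Finset.sum_eq_zero fun h _ => ?_
      by_cases hEv : h 0 = a ∧ h (Fin.last m) = b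
      · rw [if_pos hEv]
        have h2 := hterm h (Finset.mem_univ h)
        rw [if_pos hEv, one_mul] at h2
        rw [h2, mul_zero]
      · rw [if_neg hEv]
    rw [h0, hZ0, mul_zero]
  · have hZpos : 0 < segSum P m (fun _ => 1) a b :=
      lt_of_le_of_ne
        (segSum_nonneg P hPnn m _ (fun _ => zero_le_one) a b) (Ne.symm hZ0)
    have hb := hbound μ hμ0 hμ1 m hm a b (by rw [hZ]; exact hZpos)
    unfold mjpCondExp at hb
    rw [hZ] at hb
    rw [div_le_iff₀ hZpos] at hb
    refine le_trans (le_of_eq ?_) hb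
    rw [← hN]
    exact Finset.sum_congr rfl fun h _ => by congr!

end Aux

/-- **Jump bound given an event measurable w.r.t. `(S_{i₁},…,S_{i_k})`.**
Let `P` be irreducible and stochastic with `P(s,s) ≥ η > 0`, and let `n₀`, `δ > 0`
satisfy the two-endpoint jump bound. Fix `k`, monotone indices
`0 ≤ i₁ ≤ ⋯ ≤ i_k ≤ n` with `n ≥ (k+1)·n₀`, and let `E` be any positive-probability
event determined by the values of the chain at the indices `i₁, …, i_k`
(encoded as `E f ↔ B (f ∘ idx)` for a predicate `B` on `Fin k → S`).
Then `E(|J| | E) ≤ (1 - δ/(k+1)) n`. -/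
theorem jump_bound_given_observation_event
    {S : Type*} [Fintype S] [DecidableEq S]
    (P : Matrix S S ℝ) (η : ℝ)
    (hPnn : ∀ s s' : S, 0 ≤ P s s')
    (hProw : ∀ s : S, ∑ s' : S, P s s' = 1)
    (hirr : ∀ s s' : S, ∃ m : ℕ, 0 < (P ^ m) s s')
    (hη : 0 < η) (hdiag : ∀ s : S, η ≤ P s s)
    (n₀ : ℕ) (δ : ℝ) (hδ : 0 < δ)
    (hbound : ∀ (μ : S → ℝ), (∀ s, 0 ≤ μ s) → (∑ s, μ s = 1) →
      ∀ m : ℕ, n₀ ≤ m → ∀ a b : S,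
        0 < mjpProb m μ P (fun f => f 0 = a ∧ f (Fin.last m) = b) →
        mjpCondExp m μ P (fun f => (numJumps m f : ℝ))
            (fun f => f 0 = a ∧ f (Fin.last m) = b) ≤ (1 - δ) * m)
    (ν : S → ℝ) (hν0 : ∀ s, 0 ≤ ν s) (hν1 : ∑ s, ν s = 1)
    (k n : ℕ) (hn : (k + 1) * n₀ ≤ n)
    (idx : Fin k → Fin (n + 1)) (hidx : Monotone idx)
    (B : (Fin k → S) → Prop)
    (hpos : 0 < mjpProb n ν P (fun f => B (fun j => f (idx j)))) :
    mjpCondExp n ν P (fun f => (numJumps n f : ℝ))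
        (fun f => B (fun j => f (idx j)))
      ≤ (1 - δ / (k + 1)) * n := by
  classical
  set E : (Fin (n + 1) → S) → Prop := fun f => B (fun j => f (idx j)) with hEdef
  rcases Nat.eq_zero_or_pos n with hn0 | hn1
  · subst hn0
    have hnum0 : mjpCondExp 0 ν P (fun f => ((numJumps 0 f : ℝ))) E = 0 := by
      unfold mjpCondExp
      rw [div_eq_zero_iff]
      left
      refine Finset.sum_eq_zero fun f _ => ?_
      have h0 : numJumps 0 f = 0 := by simp [numJumps]
      by_cases hEf : E f
      · rw [if_pos hEf]
        dsimp only
        rw [h0]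
        norm_num
      · rw [if_neg hEf]
    rw [hnum0]
    norm_num
  · obtain ⟨p, q, hpq, hq, hn₀m, hm1, hnkm, hext⟩ := exists_cut n n₀ k hn1 hn idx hidx
    have hmn : q - p ≤ n := by omega
    have hE : ∀ f g : Fin (n + 1) → S,
        (∀ i : Fin (n + 1), i.val ≤ p ∨ q ≤ i.val → f i = g i) → (E f ↔ E g) := by
      intro f g hfg
      rw [hEdef]
      have hfg2 : (fun j => f (idx j)) = (fun j => g (idx j)) :=
        funext fun j => hfg (idx j) (hext j)
      dsimp only
      rw [hfg2]
    have hD0 : 0 < mjpProb n ν P E := hpos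
    have hfac := factor P ν n p q hpq hq E hE (fun h => ((numJumps (q - p) h : ℝ)))
    have hfac1 := factor P ν n p q hpq hq E hE (fun _ => (1 : ℝ))
    have hDeq : (∑ f : Fin (n + 1) → S, if E f then (1 : ℝ) * mjpPathWeight n ν P f else 0)
        = mjpProb n ν P E := by
      unfold mjpProb
      exact Finset.sum_congr rfl fun f _ => by rw [one_mul]
    -- middle bound on the segment-jump part
    have hmid : (∑ f : Fin (n + 1) → S,
          if E f then ((numJumps (q - p) (segOf n p q hpq hq f) : ℝ)) *
            mjpPathWeight n ν P f else 0)
        ≤ ((1 - δ) * ((q - p : ℕ) : ℝ)) *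
            (∑ f : Fin (n + 1) → S, if E f then (1 : ℝ) * mjpPathWeight n ν P f else 0) := by
      rw [hfac, hfac1, Finset.mul_sum]
      refine Finset.sum_le_sum fun u _ => ?_
      by_cases hEu : E (extendU n p q (hpq.trans hq) u)
      · rw [if_pos hEu, if_pos hEu]
        have hK : 0 ≤ ν (extendU n p q (hpq.trans hq) u 0) *
            ∏ i ∈ Finset.univ.filter (fun i : Fin n => ¬(p ≤ i.val ∧ i.val < q)),
              P (extendU n p q (hpq.trans hq) u i.castSucc)
                (extendU n p q (hpq.trans hq) u i.succ) :=
          mul_nonneg (hν0 _) (Finset.prod_nonneg fun _ _ => hPnn _ _)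
        have hsb := seg_bound P hPnn n₀ δ hbound (q - p) hn₀m
          (u ⟨⟨p, by omega⟩, Or.inl le_rfl⟩) (u ⟨⟨q, by omega⟩, Or.inr le_rfl⟩)
        calc _ ≤ (ν (extendU n p q (hpq.trans hq) u 0) *
              ∏ i ∈ Finset.univ.filter (fun i : Fin n => ¬(p ≤ i.val ∧ i.val < q)),
                P (extendU n p q (hpq.trans hq) u i.castSucc)
                  (extendU n p q (hpq.trans hq) u i.succ)) *
              (((1 - δ) * ((q - p : ℕ) : ℝ)) *
                segSum P (q - p) (fun _ => (1 : ℝ)) (u ⟨⟨p, by omega⟩, Or.inl le_rfl⟩)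
                  (u ⟨⟨q, by omega⟩, Or.inr le_rfl⟩)) :=
            mul_le_mul_of_nonneg_left hsb hK
          _ = _ := by ring
      · rw [if_neg hEu, if_neg hEu, mul_zero]
    -- pointwise jump bound and assembling the numerator bound
    have hnum_le : (∑ f : Fin (n + 1) → S,
          if E f then ((numJumps n f : ℝ)) * mjpPathWeight n ν P f else 0)
        ≤ ((((n : ℝ) - ((q - p : ℕ) : ℝ)) + (1 - δ) * ((q - p : ℕ) : ℝ))) * mjpProb n ν P E := by
      have step1 : ∀ f : Fin (n + 1) → S, ((numJumps n f : ℝ))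
          ≤ ((n - (q - p) : ℕ) : ℝ) + ((numJumps (q - p) (segOf n p q hpq hq f) : ℝ)) := by
        intro f
        have h := jumps_split n p q hpq hq f
        exact_mod_cast h
      calc (∑ f : Fin (n + 1) → S,
            if E f then ((numJumps n f : ℝ)) * mjpPathWeight n ν P f else 0)
          ≤ ∑ f : Fin (n + 1) → S,
            if E f then (((n - (q - p) : ℕ) : ℝ)
              + ((numJumps (q - p) (segOf n p q hpq hq f) : ℝ))) *
                mjpPathWeight n ν P f else 0 := by
            refine Finset.sum_le_sum fun f _ => ?_
            by_cases hEf : E f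
            · rw [if_pos hEf, if_pos hEf]
              exact mul_le_mul_of_nonneg_right (step1 f)
                (mjpPathWeight_nonneg n ν P hν0 hPnn f)
            · rw [if_neg hEf, if_neg hEf]
        _ = ((n - (q - p) : ℕ) : ℝ) *
              (∑ f : Fin (n + 1) → S, if E f then (1 : ℝ) * mjpPathWeight n ν P f else 0)
            + ∑ f : Fin (n + 1) → S,
              if E f then ((numJumps (q - p) (segOf n p q hpq hq f) : ℝ)) *
                mjpPathWeight n ν P f else 0 := by
            rw [Finset.mul_sum, ← Finset.sum_add_distrib]
            refine Finset.sum_congr rfl fun f _ => ?_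
            by_cases hEf : E f
            · rw [if_pos hEf, if_pos hEf, if_pos hEf]
              ring
            · rw [if_neg hEf, if_neg hEf, if_neg hEf]
              ring
        _ ≤ ((n - (q - p) : ℕ) : ℝ) *
              (∑ f : Fin (n + 1) → S, if E f then (1 : ℝ) * mjpPathWeight n ν P f else 0)
            + ((1 - δ) * ((q - p : ℕ) : ℝ)) *
              (∑ f : Fin (n + 1) → S, if E f then (1 : ℝ) * mjpPathWeight n ν P f else 0) := by
            linarith [hmid]
        _ = ((((n : ℝ) - ((q - p : ℕ) : ℝ)) + (1 - δ) * ((q - p : ℕ) : ℝ))) * mjpProb n ν P E := by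
            rw [hDeq, Nat.cast_sub hmn]
            ring
    -- conclude
    unfold mjpCondExp
    rw [div_le_iff₀ hD0]
    refine le_trans hnum_le ?_
    refine mul_le_mul_of_nonneg_right ?_ hD0.le
    have hc : (n : ℝ) ≤ ((k : ℝ) + 1) * ((q - p : ℕ) : ℝ) := by
      calc (n : ℝ) ≤ (((k + 1) * (q - p) : ℕ) : ℝ) := by exact_mod_cast hnkm
        _ = ((k : ℝ) + 1) * ((q - p : ℕ) : ℝ) := by push_cast; ring
    have hk : (0 : ℝ) < (k : ℝ) + 1 := by positivity
    have hdm : δ * (n : ℝ) / ((k : ℝ) + 1) ≤ δ * ((q - p : ℕ) : ℝ) := by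
      rw [div_le_iff₀ hk]
      nlinarith [mul_le_mul_of_nonneg_left hc hδ.le]
    have hrhs : (1 - δ / ((k : ℝ) + 1)) * (n : ℝ)
        = (n : ℝ) - δ * (n : ℝ) / ((k : ℝ) + 1) := by ring
    rw [hrhs]
    linarith
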